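/- Let E be a real Banach space, let a > 0, m ≥ 0, L ≥ 0, let b : [0, a] → ℝ be a nonnegative square-integrable function, let v : [0, a] → E be continuous, and let u : [0, a] → E be continuous with ‖u(t)‖ ≤ m ∫₀ᵗ (b(s) + L ‖u(s)‖) ds + m ∫₀ᵗ ‖v(s)‖ ds for all t ∈ [0, a]. Then for all t ∈ [0, a], ‖u(t)‖ ≤ m √a (‖b‖_{L²(0,a)} + ‖v‖_{L²(0,a)}) e^{m L t}, and consequently the L² norm of u satisfies (∫₀ᵃ ‖u(t)‖² dt)^{1/2} ≤ m a (‖b‖_{L²(0,a)} + ‖v‖_{L²(0,a)}) e^{m L a}. -/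

import Mathlib

open MeasureTheory Set in
private lemma my_gronwall {φ : ℝ → ℝ} {a K c : ℝ} (ha : 0 < a) (hc : 0 ≤ c)
    (hφ : ContinuousOn φ (Set.Icc 0 a))
    (h : ∀ t ∈ Set.Icc 0 a, φ t ≤ K + c * ∫ s in (0:ℝ)..t, φ s) :
    ∀ t ∈ Set.Icc 0 a, φ t ≤ K * Real.exp (c * t) := by
  have hφint : ∀ t ∈ Set.Icc (0:ℝ) a, IntervalIntegrable φ volume 0 t := by
    intro t ht
    apply ContinuousOn.intervalIntegrable
    apply hφ.mono
    rw [Set.uIcc_of_le ht.1]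
    exact Set.Icc_subset_Icc le_rfl ht.2
  set f : ℝ → ℝ := fun t => K + c * ∫ s in (0:ℝ)..t, φ s with hfdef
  have hmemIcc : ∀ x ∈ Set.Ico (0:ℝ) a, Set.Icc (0:ℝ) a ∈ nhdsWithin x (Set.Ioi x) := by
    intro x hx
    refine Filter.mem_of_superset (inter_mem_nhdsWithin (Set.Ioi x) (Iio_mem_nhds hx.2)) ?_
    rintro y ⟨hy1, hy2⟩
    exact ⟨le_trans hx.1 hy1.le, le_of_lt hy2⟩
  have hfc : ContinuousOn f (Set.Icc 0 a) := by
    apply continuousOn_const.add (continuousOn_const.mul ?_)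
    have := intervalIntegral.continuousOn_primitive_interval'
      (hφint a ⟨ha.le, le_rfl⟩) (Set.left_mem_uIcc)
    rwa [Set.uIcc_of_le ha.le] at this
  have hder : ∀ x ∈ Set.Ico (0:ℝ) a, HasDerivWithinAt f (c * φ x) (Set.Ici x) x := by
    intro x hx
    have h1 : HasDerivWithinAt (fun t => ∫ s in (0:ℝ)..t, φ s) (φ x) (Set.Ici x) x := by
      apply intervalIntegral.integral_hasDerivWithinAt_right (hφint x ⟨hx.1, hx.2.le⟩)
        (t := Set.Ioi x)
      · exact ⟨Set.Icc 0 a, hmemIcc x hx, hφ.aestronglyMeasurable measurableSet_Icc⟩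
      · exact (hφ x ⟨hx.1, hx.2.le⟩).mono_of_mem_nhdsWithin (hmemIcc x hx)
    exact ((h1.const_mul c).const_add K)
  have hmain := le_gronwallBound_of_liminf_deriv_right_le (f := f) (f' := fun x => c * φ x)
    (δ := K) (K := c) (ε := 0) hfc
    (fun x hx r hr => (hder x hx).liminf_right_slope_le hr)
    (by simp [hfdef])
    (fun x hx => by
      have := h x ⟨hx.1, hx.2.le⟩
      have h2 := mul_le_mul_of_nonneg_left this hc
      simpa [hfdef] using h2)
  intro t ht
  have := hmain t ht
  rw [gronwallBound_ε0, sub_zero] at this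
  exact (h t ht).trans this

open MeasureTheory Set in
private lemma my_cs {f : ℝ → ℝ} {t : ℝ} (ht : 0 ≤ t)
    (hmeas : AEStronglyMeasurable f (volume.restrict (Set.Ioc 0 t)))
    (hint : IntegrableOn (fun s => f s ^ 2) (Set.Ioc 0 t) volume)
    (hf : ∀ s, 0 ≤ f s) :
    ∫ s in (0:ℝ)..t, f s ≤ Real.sqrt t * Real.sqrt (∫ s in (0:ℝ)..t, f s ^ 2) := by
  rw [intervalIntegral.integral_of_le ht, intervalIntegral.integral_of_le ht]
  set μ := volume.restrict (Set.Ioc (0:ℝ) t) with hμ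
  have hmem : MemLp f 2 μ := (memLp_two_iff_integrable_sq hmeas).mpr hint
  have hone : MemLp (fun _ : ℝ => (1:ℝ)) 2 μ := memLp_const 1
  have hpq : Real.HolderConjugate 2 2 := Real.HolderConjugate.two_two
  have h := integral_mul_le_Lp_mul_Lq_of_nonneg (μ := μ) hpq
      (Filter.Eventually.of_forall hf) (Filter.Eventually.of_forall fun _ => zero_le_one)
      (by simpa using hmem) (by simpa using hone)
  have hsq : ∀ x : ℝ, x ^ (2:ℝ) = x ^ (2:ℕ) := fun x => by
    rw [show (2:ℝ) = ((2:ℕ):ℝ) by norm_num, Real.rpow_natCast]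
  simp only [hsq, one_pow, mul_one, Real.one_rpow] at h
  have hμuniv : ∫ _ : ℝ, (1:ℝ) ∂μ = t := by
    simp [hμ, Real.volume_Ioc, ht]
  rw [hμuniv] at h
  calc ∫ s, f s ∂μ ≤ (∫ s, f s ^ 2 ∂μ) ^ (1/2 : ℝ) * t ^ (1/2 : ℝ) := h
    _ = Real.sqrt t * Real.sqrt (∫ s, f s ^ 2 ∂μ) := by
        rw [← Real.sqrt_eq_rpow, ← Real.sqrt_eq_rpow, mul_comm]

/-- Gronwall-type growth estimate. If
`‖u(t)‖ ≤ m ∫₀ᵗ (b(s) + L ‖u(s)‖) ds + m ∫₀ᵗ ‖v(s)‖ ds` on `[0, a]`, then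
`‖u(t)‖ ≤ m √a (‖b‖_{L²} + ‖v‖_{L²}) e^{m L t}` on `[0, a]`, and consequently
`(∫₀ᵃ ‖u(t)‖² dt)^{1/2} ≤ m a (‖b‖_{L²} + ‖v‖_{L²}) e^{m L a}`. -/
theorem growth_estimate_solution_operator
    {E : Type*} [NormedAddCommGroup E] [NormedSpace ℝ E]
    (a : ℝ) (ha : 0 < a) (m L : ℝ) (hm : 0 ≤ m) (hL : 0 ≤ L)
    (b : ℝ → ℝ) (hb : ∀ s, 0 ≤ b s)
    (hbint : IntervalIntegrable (fun s => (b s) ^ 2) MeasureTheory.volume 0 a)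
    (v u : ℝ → E)
    (hv : ContinuousOn v (Set.Icc 0 a)) (hu : ContinuousOn u (Set.Icc 0 a))
    (hgrow : ∀ t ∈ Set.Icc 0 a,
      ‖u t‖ ≤ m * (∫ s in (0:ℝ)..t, (b s + L * ‖u s‖)) +
        m * ∫ s in (0:ℝ)..t, ‖v s‖) :
    (∀ t ∈ Set.Icc 0 a,
      ‖u t‖ ≤ m * Real.sqrt a *
        (Real.sqrt (∫ s in (0:ℝ)..a, (b s) ^ 2) +
          Real.sqrt (∫ s in (0:ℝ)..a, ‖v s‖ ^ 2)) * Real.exp (m * L * t)) ∧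
    Real.sqrt (∫ t in (0:ℝ)..a, ‖u t‖ ^ 2) ≤
      m * a * (Real.sqrt (∫ s in (0:ℝ)..a, (b s) ^ 2) +
        Real.sqrt (∫ s in (0:ℝ)..a, ‖v s‖ ^ 2)) * Real.exp (m * L * a) := by
  open MeasureTheory Set intervalIntegral in
  set B := Real.sqrt (∫ s in (0:ℝ)..a, (b s) ^ 2) with hB
  set V := Real.sqrt (∫ s in (0:ℝ)..a, ‖v s‖ ^ 2) with hV
  have hBnn : 0 ≤ B := hB ▸ Real.sqrt_nonneg _
  have hVnn : 0 ≤ V := hV ▸ Real.sqrt_nonneg _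
  set K := m * Real.sqrt a * (B + V) with hK
  have hKnn : 0 ≤ K := by
    rw [hK]
    have := Real.sqrt_nonneg a
    positivity
  -- integrability facts for b
  have hbsq_on : IntegrableOn (fun s => b s ^ 2) (Set.Ioc 0 a) volume :=
    (intervalIntegrable_iff_integrableOn_Ioc_of_le ha.le).mp hbint
  have hbmeas : AEStronglyMeasurable b (volume.restrict (Set.Ioc 0 a)) := by
    have heq : b = fun s => Real.sqrt (b s ^ 2) := funext fun s => (Real.sqrt_sq (hb s)).symm
    rw [heq]
    exact Real.continuous_sqrt.comp_aestronglyMeasurable hbsq_on.aestronglyMeasurable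
  haveI : IsFiniteMeasure (volume.restrict (Set.Ioc (0:ℝ) a)) := by
    constructor
    rw [Measure.restrict_apply_univ]
    simp [Real.volume_Ioc]
  have hbmem : MemLp b 2 (volume.restrict (Set.Ioc 0 a)) :=
    (memLp_two_iff_integrable_sq hbmeas).mpr hbsq_on
  have hbII : IntervalIntegrable b volume 0 a :=
    (intervalIntegrable_iff_integrableOn_Ioc_of_le ha.le).mpr
      (hbmem.integrable (by norm_num))
  have hbIt : ∀ t ∈ Set.Icc (0:ℝ) a, IntervalIntegrable b volume 0 t := fun t ht =>
    hbII.mono_set (by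
      rw [Set.uIcc_of_le ht.1, Set.uIcc_of_le ha.le]
      exact Set.Icc_subset_Icc le_rfl ht.2)
  -- integrability for ‖u‖, ‖v‖
  have hφ : ContinuousOn (fun t => ‖u t‖) (Set.Icc 0 a) := hu.norm
  have hφI : ∀ t ∈ Set.Icc (0:ℝ) a, IntervalIntegrable (fun s => ‖u s‖) volume 0 t := by
    intro t ht
    apply ContinuousOn.intervalIntegrable
    apply hφ.mono
    rw [Set.uIcc_of_le ht.1]
    exact Set.Icc_subset_Icc le_rfl ht.2
  have hvsqint : IntervalIntegrable (fun s => ‖v s‖ ^ 2) volume 0 a := by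
    apply ContinuousOn.intervalIntegrable
    rw [Set.uIcc_of_le ha.le]
    exact (hv.norm).pow 2
  -- Cauchy-Schwarz bounds
  have hbCS : ∀ t ∈ Set.Icc (0:ℝ) a, (∫ s in (0:ℝ)..t, b s) ≤ Real.sqrt a * B := by
    intro t ht
    have h1 := my_cs ht.1
      (hbmeas.mono_measure (Measure.restrict_mono (Set.Ioc_subset_Ioc le_rfl ht.2) le_rfl))
      (hbsq_on.mono_set (Set.Ioc_subset_Ioc le_rfl ht.2)) hb
    refine h1.trans (mul_le_mul (Real.sqrt_le_sqrt ht.2) (Real.sqrt_le_sqrt ?_)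
      (Real.sqrt_nonneg _) (Real.sqrt_nonneg _))
    exact intervalIntegral.integral_mono_interval le_rfl ht.1 ht.2
      (Filter.Eventually.of_forall fun s => sq_nonneg _) hbint
  have hvCS : ∀ t ∈ Set.Icc (0:ℝ) a, (∫ s in (0:ℝ)..t, ‖v s‖) ≤ Real.sqrt a * V := by
    intro t ht
    have hsub : Set.Ioc (0:ℝ) t ⊆ Set.Icc 0 a := fun s hs =>
      ⟨hs.1.le, hs.2.trans ht.2⟩
    have h1 := my_cs (f := fun s => ‖v s‖) ht.1
      ((hv.norm.mono hsub).aestronglyMeasurable measurableSet_Ioc)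
      (((hvsqint.mono_set (by
          rw [Set.uIcc_of_le ht.1, Set.uIcc_of_le ha.le]
          exact Set.Icc_subset_Icc le_rfl ht.2)).def').mono_set
        (by rw [Set.uIoc_of_le ht.1]))
      (fun s => norm_nonneg _)
    refine h1.trans (mul_le_mul (Real.sqrt_le_sqrt ht.2) (Real.sqrt_le_sqrt ?_)
      (Real.sqrt_nonneg _) (Real.sqrt_nonneg _))
    exact intervalIntegral.integral_mono_interval le_rfl ht.1 ht.2
      (Filter.Eventually.of_forall fun s => sq_nonneg _) hvsqint
  -- Gronwall precondition
  have hpre : ∀ t ∈ Set.Icc (0:ℝ) a,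
      ‖u t‖ ≤ K + (m * L) * ∫ s in (0:ℝ)..t, ‖u s‖ := by
    intro t ht
    have h0 := hgrow t ht
    have hsplit : (∫ s in (0:ℝ)..t, (b s + L * ‖u s‖)) =
        (∫ s in (0:ℝ)..t, b s) + L * ∫ s in (0:ℝ)..t, ‖u s‖ := by
      rw [intervalIntegral.integral_add (hbIt t ht) ((hφI t ht).const_mul L),
        intervalIntegral.integral_const_mul]
    rw [hsplit] at h0
    have h1 := mul_le_mul_of_nonneg_left (hbCS t ht) hm
    have h2 := mul_le_mul_of_nonneg_left (hvCS t ht) hm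
    rw [hK]
    nlinarith [h0, h1, h2]
  have hgr := my_gronwall ha (mul_nonneg hm hL) hφ hpre
  constructor
  · intro t ht
    have := hgr t ht
    calc ‖u t‖ ≤ K * Real.exp (m * L * t) := this
      _ = m * Real.sqrt a * (B + V) * Real.exp (m * L * t) := by rw [hK]
  · set C := K * Real.exp (m * L * a) with hC
    have hCnn : 0 ≤ C := mul_nonneg hKnn (Real.exp_pos _).le
    have hmono : ∀ t ∈ Set.Icc (0:ℝ) a, ‖u t‖ ^ 2 ≤ C ^ 2 := by
      intro t ht
      have hexp : Real.exp (m * L * t) ≤ Real.exp (m * L * a) :=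
        Real.exp_le_exp.2 (mul_le_mul_of_nonneg_left ht.2 (mul_nonneg hm hL))
      have := (hgr t ht).trans (mul_le_mul_of_nonneg_left hexp hKnn)
      exact pow_le_pow_left₀ (norm_nonneg _) this 2
    have husqint : IntervalIntegrable (fun t => ‖u t‖ ^ 2) volume 0 a := by
      apply ContinuousOn.intervalIntegrable
      rw [Set.uIcc_of_le ha.le]
      exact (hu.norm).pow 2
    have hint : (∫ t in (0:ℝ)..a, ‖u t‖ ^ 2) ≤ ∫ _ in (0:ℝ)..a, C ^ 2 :=
      intervalIntegral.integral_mono_on ha.le husqint intervalIntegrable_const hmono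
    rw [intervalIntegral.integral_const, smul_eq_mul, sub_zero] at hint
    calc Real.sqrt (∫ t in (0:ℝ)..a, ‖u t‖ ^ 2)
        ≤ Real.sqrt (a * C ^ 2) := Real.sqrt_le_sqrt hint
      _ = Real.sqrt a * C := by
          rw [Real.sqrt_mul ha.le, Real.sqrt_sq hCnn]
      _ = m * a * (B + V) * Real.exp (m * L * a) := by
          rw [hC, hK]
          have h2 : Real.sqrt a * Real.sqrt a = a := Real.mul_self_sqrt ha.le
          calc Real.sqrt a * (m * Real.sqrt a * (B + V) * Real.exp (m * L * a))
              = m * (Real.sqrt a * Real.sqrt a) * (B + V) * Real.exp (m * L * a) := by ring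
            _ = m * a * (B + V) * Real.exp (m * L * a) := by rw [h2]
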